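/- Let X be a cocompact generalized Baumslag–Solitar tree with group G such that every edge stabilizer is a proper subgroup of each of its two neighboring vertex stabilizers. Then X is unfolded: for every edge e of X, the one-edge splitting of G obtained by collapsing the components of X minus the orbit of e admits no nontrivial fold onto it. -/

import Mathlib

open SimpleGraph

section Defs

variable {G V : Type} [Group G]

/-- The action `ρ` preserves adjacency of the graph `X`. -/
def PreservesAdj (X : SimpleGraph V) (ρ : G →* Equiv.Perm V) : Prop :=
  ∀ (g : G) (u v : V), X.Adj u v → X.Adj (ρ g u) (ρ g v)

/-- The action is without inversions: no element swaps the endpoints of an edge. -/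
def NoInversions (X : SimpleGraph V) (ρ : G →* Equiv.Perm V) : Prop :=
  ∀ (g : G) (u v : V), X.Adj u v → ¬(ρ g u = v ∧ ρ g v = u)

/-- `X` together with `ρ` is a `G`-tree: a tree with a `G`-action by graph
automorphisms, without inversions. -/
def IsGTree (X : SimpleGraph V) (ρ : G →* Equiv.Perm V) : Prop :=
  X.IsTree ∧ PreservesAdj X ρ ∧ NoInversions X ρ

/-- The stabilizer of a vertex. -/
def vStab (ρ : G →* Equiv.Perm V) (v : V) : Subgroup G :=
  (MulAction.stabilizer (Equiv.Perm V) v).comap ρ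

/-- The stabilizer of an edge (for an action without inversions this is the
intersection of the stabilizers of the two endpoints). -/
def eStab (ρ : G →* Equiv.Perm V) (u v : V) : Subgroup G :=
  vStab ρ u ⊓ vStab ρ v

/-- An element is elliptic if it fixes a vertex; it is hyperbolic otherwise. -/
def Elliptic (ρ : G →* Equiv.Perm V) (γ : G) : Prop := ∃ v : V, ρ γ v = v

/-- A (bi-infinite) line in a graph. -/
def IsLine (X : SimpleGraph V) (L : Set V) : Prop :=
  ∃ f : ℤ → V, Function.Injective f ∧ (∀ n : ℤ, X.Adj (f n) (f (n + 1))) ∧ L = Set.range f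

/-- A set of vertices invariant under the element `γ`. -/
def InvariantSet (ρ : G →* Equiv.Perm V) (γ : G) (L : Set V) : Prop :=
  ⇑(ρ γ) '' L = L

/-- An axis for `γ` : a `γ`-invariant line. (A hyperbolic element has a unique one.) -/
def IsAxis (X : SimpleGraph V) (ρ : G →* Equiv.Perm V) (γ : G) (L : Set V) : Prop :=
  IsLine X L ∧ InvariantSet ρ γ L

/-- A subgroup is infinite cyclic. -/
def IsInfCyclic {G : Type} [Group G] (H : Subgroup G) : Prop := IsCyclic H ∧ Infinite H

/-- A generalized Baumslag–Solitar tree: a `G`-tree all of whose vertex and edge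
stabilizers are infinite cyclic. -/
def IsGBSTree (X : SimpleGraph V) (ρ : G →* Equiv.Perm V) : Prop :=
  IsGTree X ρ ∧ (∀ v : V, IsInfCyclic (vStab ρ v)) ∧
    (∀ u v : V, X.Adj u v → IsInfCyclic (eStab ρ u v))

/-- Two group elements are commensurable: some nonzero powers of them coincide. -/
def CommElts (γ δ : G) : Prop := ∃ m n : ℤ, m ≠ 0 ∧ n ≠ 0 ∧ γ ^ m = δ ^ n

/-- A generalized Baumslag–Solitar group: a group admitting a GBS tree. -/
def IsGBSGroup (G : Type) [Group G] : Prop :=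
  ∃ (V : Type) (X : SimpleGraph V) (ρ : G →* Equiv.Perm V), IsGBSTree X ρ

/-- A group is free: isomorphic to a free group on some set. -/
def IsFreeGrp (G : Type) [Group G] : Prop := ∃ ι : Type, Nonempty (G ≃* FreeGroup ι)

/-- The orbit of the edge `{a, b}` under the action. -/
def EdgeOrbit (ρ : G →* Equiv.Perm V) (a b : V) : Set (Sym2 V) :=
  {e | ∃ g : G, e = s(ρ g a, ρ g b)}

/-- A one-edge splitting of `G` over `C`: a `G`-tree with a single orbit of edges,
no global fixed vertex, and an edge with stabilizer `C` (this is the Bass–Serre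
tree of a nontrivial decomposition `A ∗_C B` or `A ∗_C`). -/
def OneEdgeSplitting (X : SimpleGraph V) (ρ : G →* Equiv.Perm V) (u v : V)
    (C : Subgroup G) : Prop :=
  IsGTree X ρ ∧ X.Adj u v ∧ eStab ρ u v = C ∧
  (¬ ∃ w : V, ∀ g : G, ρ g w = w) ∧
  (∀ u' v' : V, X.Adj u' v' → ∃ g : G, (ρ g u = u' ∧ ρ g v = v') ∨ (ρ g u = v' ∧ ρ g v = u'))

/-- `G` splits over the subgroup `C`. -/
def SplitsOver (G : Type) [Group G] (C : Subgroup G) : Prop :=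
  ∃ (W : Type) (T : SimpleGraph W) (σ : G →* Equiv.Perm W) (u v : W),
    OneEdgeSplitting T σ u v C

/-- Cayley graph of a group with respect to a set of generators. -/
def cayley (G : Type) [Group G] (S : Set G) : SimpleGraph G :=
  SimpleGraph.fromRel (fun a b => a⁻¹ * b ∈ S)

end Defs

/-- `T` has a single orbit of edges under the action `σ`. -/
def OneEdgeOrbit {G W : Type} [Group G] (T : SimpleGraph W) (σ : G →* Equiv.Perm W) : Prop :=
  ∃ u v : W, T.Adj u v ∧ ∀ x y : W, T.Adj x y →
    ∃ g : G, (σ g u = x ∧ σ g v = y) ∨ (σ g u = y ∧ σ g v = x)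

/-- `q : V → W` is the equivariant quotient map collapsing each connected component
of `X − G⬝{a,b}` to a vertex; the resulting tree `T` is the Bass–Serre tree of the
one-edge splitting of `G` associated to the edge `{a, b}`. -/
def IsCollapseMap {G V W : Type} [Group G] (X : SimpleGraph V) (ρ : G →* Equiv.Perm V)
    (a b : V) (T : SimpleGraph W) (σ : G →* Equiv.Perm W) (q : V → W) : Prop :=
  (∀ (g : G) (x : V), q (ρ g x) = σ g (q x)) ∧ Function.Surjective q ∧
  T.Adj (q a) (q b) ∧
  (∀ x y : V, q x = q y ↔ ∃ p : X.Walk x y, ∀ e ∈ p.edges, e ∉ EdgeOrbit ρ a b) ∧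
  (∀ u' v' : W, T.Adj u' v' →
    ∃ g : G, (σ g (q a) = u' ∧ σ g (q b) = v') ∨ (σ g (q a) = v' ∧ σ g (q b) = u'))

/-- `f : W' → W` is a nontrivial fold of `G`-trees: an equivariant surjective graph
morphism identifying two distinct edges with a common initial vertex. -/
def NontrivialFoldOnto {G W' W : Type} [Group G]
    (T' : SimpleGraph W') (σ' : G →* Equiv.Perm W')
    (T : SimpleGraph W) (σ : G →* Equiv.Perm W) (f : W' → W) : Prop :=
  (∀ (g : G) (x : W'), f (σ' g x) = σ g (f x)) ∧ Function.Surjective f ∧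
  (∀ x y : W', T'.Adj x y → T.Adj (f x) (f y)) ∧
  ∃ x y y' : W', T'.Adj x y ∧ T'.Adj x y' ∧ y ≠ y' ∧ f y = f y'

section AuxLemmas

variable {W : Type}


lemma list_map_fix {π : W → W} : ∀ {l : List W}, l.map π = l → ∀ z ∈ l, π z = z := by
  intro l
  induction l with
  | nil => intro _ z hz; simp at hz
  | cons a t ih =>
    intro h z hz
    simp only [List.map_cons, List.cons.injEq] at h
    rcases List.mem_cons.mp hz with rfl | hz'
    · exact h.1
    · exact ih h.2 z hz'

lemma fix_walk_support {Y : SimpleGraph W} (hY : Y.IsTree) (π : Equiv.Perm W)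
    (hadj : ∀ u v, Y.Adj u v → Y.Adj (π u) (π v)) {u v : W}
    (hu : π u = u) (hv : π v = v) (p : Y.Walk u v) (hp : p.IsPath) :
    ∀ z ∈ p.support, π z = z := by
  let hom : Y →g Y := ⟨π, fun h => hadj _ _ h⟩
  have hinj : Function.Injective hom := π.injective
  have h1 : ((p.map hom).copy hu hv).IsPath := by
    rw [Walk.isPath_copy]
    exact p.map_isPath_of_injective hinj hp
  have heq : (p.map hom).copy hu hv = p := (hY.existsUnique_path u v).unique h1 hp
  have hsupp : p.support.map π = p.support := by
    have := congrArg Walk.support heq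
    rwa [Walk.support_copy, Walk.support_map] at this
  exact list_map_fix hsupp

lemma cross_bridge {Y : SimpleGraph W} (hY : Y.IsTree) {v w : W} (hvw : Y.Adj v w)
    {ξ₁ ξ₂ : W} (P₁ : Y.Walk v ξ₁) (h₁ : w ∉ P₁.support)
    (P₂ : Y.Walk w ξ₂) (h₂ : v ∉ P₂.support) (Q : Y.Walk ξ₁ ξ₂) :
    s(v, w) ∈ Q.edges := by
  have hbr := (isBridge_iff_adj_and_forall_walk_mem_edges.mp
    (isAcyclic_iff_forall_adj_isBridge.mp hY.IsAcyclic hvw))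
  have hmem := hbr (P₁.append (Q.append P₂.reverse))
  simp only [Walk.edges_append, List.mem_append, Walk.edges_reverse, List.mem_reverse] at hmem
  rcases hmem with h | h | h
  · exact absurd (P₁.snd_mem_support_of_mem_edges h) h₁
  · exact h
  · exact absurd (P₂.fst_mem_support_of_mem_edges h) h₂

lemma reachable_induce {Y : SimpleGraph W} {s : Set W} :
    ∀ {u v : W} (p : Y.Walk u v), (∀ z ∈ p.support, z ∈ s) →
      ∀ (hu : u ∈ s) (hv : v ∈ s), (Y.induce s).Reachable ⟨u, hu⟩ ⟨v, hv⟩ := by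
  intro u v p
  induction p with
  | nil => intro _ hu hv; rfl
  | @cons a b c h q ih =>
    intro hs hu hv
    have hb : b ∈ s := hs b (by simp [Walk.support_cons])
    have : (Y.induce s).Adj ⟨a, hu⟩ ⟨b, hb⟩ := h
    exact (this.reachable).trans (ih (fun z hz => hs z (by simp [Walk.support_cons, hz])) hb hv)

lemma isAcyclic_induce {Y : SimpleGraph W} (hY : Y.IsAcyclic) (s : Set W) :
    (Y.induce s).IsAcyclic := by
  rw [isAcyclic_iff_path_unique] at hY ⊢
  intro z z' p q
  let emb : Y.induce s ↪g Y := SimpleGraph.Embedding.induce (G := Y) s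
  have hinj : Function.Injective emb.toHom := emb.injective
  have := hY (p.map emb.toHom hinj) (q.map emb.toHom hinj)
  have h2 := congrArg Subtype.val this
  change Walk.map emb.toHom p.1 = Walk.map emb.toHom q.1 at h2
  exact Subtype.ext (Walk.map_injective_of_injective hinj _ _ h2)


lemma perm_fix_zpow (π : Equiv.Perm W) {x : W} (hx : π x = x) (j : ℤ) : (π ^ j) x = x := by
  have hmem : π ∈ MulAction.stabilizer (Equiv.Perm W) x := hx
  have := zpow_mem hmem j
  exact this

lemma perm_fix_pow (π : Equiv.Perm W) {x : W} (hx : π x = x) (j : ℕ) : (π ^ j) x = x := by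
  have hmem : π ∈ MulAction.stabilizer (Equiv.Perm W) x := hx
  exact pow_mem hmem j

lemma zpow_fix_to_natpow (π : Equiv.Perm W) {x : W} {j : ℤ} (hj : j ≠ 0)
    (hx : (π ^ j) x = x) : ∃ n : ℕ, 0 < n ∧ (π ^ n) x = x := by
  refine ⟨j.natAbs, Int.natAbs_pos.mpr hj, ?_⟩
  have key : ((π ^ (j.natAbs : ℤ)) : Equiv.Perm W) x = x := by
    rcases Int.natAbs_eq j with h | h
    · rw [← h]; exact hx
    · rw [show (j.natAbs : ℤ) = -j by omega, zpow_neg]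
      conv_lhs => rw [← hx]
      simp
  rw [zpow_natCast] at key
  exact key

/-- every internal vertex of a path has two distinct neighbors -/
lemma internal_two_nbrs {Y : SimpleGraph W} :
    ∀ {u v : W} (p : Y.Walk u v), p.IsPath →
      ∀ z ∈ p.support, z ≠ u → z ≠ v → ∃ a b, a ≠ b ∧ Y.Adj z a ∧ Y.Adj z b := by
  intro u v p
  induction p with
  | nil => intro _ z hz hzu _; simp at hz; exact absurd hz hzu
  | @cons a b c h q ih =>
    intro hp z hz hzu hzv
    rcases List.mem_cons.mp (by simpa [Walk.support_cons] using hz) with rfl | hz'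
    · exact absurd rfl hzu
    · by_cases hzb : z = b
      · subst hzb
        cases q with
        | nil => exact absurd rfl hzv
        | @cons b' c' d' h' q' =>
          refine ⟨a, c', ?_, h.symm, h'⟩
          intro hac
          have : a ∉ (Walk.cons h' q').support := by
            have := hp.support_nodup
            simp only [Walk.support_cons, List.nodup_cons] at this
            exact this.1
          exact this (by rw [hac]; simp [Walk.support_cons])
      · exact ih hp.of_cons z hz' hzb hzv

lemma finite_tree_iso_fix :
    ∀ (N : ℕ) (W : Type) (_ : Fintype W) (H : SimpleGraph W), H.IsTree → Fintype.card W ≤ N →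
      ∀ (φ : H ≃g H), (∃ z, φ z = z) ∨ ∃ z z', H.Adj z z' ∧ φ z = z' ∧ φ z' = z := by
  intro N
  induction N with
  | zero =>
    intro W _ H hH hc φ
    obtain ⟨z⟩ := hH.1.nonempty
    have := Fintype.card_pos_iff.mpr ⟨z⟩
    omega
  | succ M ih =>
    intro W instW H hH hc φ
    classical
    have hconn : H.Connected := hH.1
    have hacyc : H.IsAcyclic := hH.2
    obtain ⟨z₀⟩ := hconn.nonempty
    by_cases h1 : Fintype.card W = 1
    · exact Or.inl ⟨z₀, Fintype.card_le_one_iff.mp (le_of_eq h1) _ _⟩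
    have hge2 : 2 ≤ Fintype.card W := by
      have := Fintype.card_pos_iff.mpr ⟨z₀⟩; omega
    -- degrees positive
    have hdegpos : ∀ z : W, 0 < H.degree z := by
      intro z
      obtain ⟨z', hz'⟩ := Fintype.exists_ne_of_one_lt_card (by omega) z
      obtain ⟨p⟩ := hconn z z'
      rw [H.degree_pos_iff_exists_adj]
      cases p with
      | nil => exact absurd rfl hz'
      | cons h q => exact ⟨_, h⟩
    have hedge := hH.card_edgeFinset
    have hsum := H.sum_degrees_eq_twice_card_edges
    -- leaf existence
    have hleaf : ∃ l, H.degree l = 1 := by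
      by_contra hno
      push_neg at hno
      have h2le : ∀ z : W, 2 ≤ H.degree z := by
        intro z; have := hdegpos z; have := hno z; omega
      have : Fintype.card W * 2 ≤ ∑ v, H.degree v :=
        Finset.card_nsmul_le_sum Finset.univ _ 2 (fun v _ => h2le v)
      rw [hsum] at this
      omega
    by_cases h2 : Fintype.card W = 2
    · -- two vertices
      obtain ⟨za, hza⟩ := hleaf
      have : 0 < H.degree za := hdegpos za
      rw [H.degree_pos_iff_exists_adj] at this
      obtain ⟨zb, hzab⟩ := this
      have hne : za ≠ zb := H.ne_of_adj hzab
      have huniv : ∀ t : W, t = za ∨ t = zb := by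
        intro t
        have hcard : ({za, zb} : Finset W).card = Fintype.card W := by
          rw [Finset.card_insert_of_notMem (Finset.notMem_singleton.mpr hne), Finset.card_singleton, h2]
        have := Finset.eq_univ_of_card _ hcard
        have ht : t ∈ ({za, zb} : Finset W) := this ▸ Finset.mem_univ t
        simpa using ht
      by_cases hfa : φ za = za
      · exact Or.inl ⟨za, hfa⟩
      by_cases hfb : φ zb = zb
      · exact Or.inl ⟨zb, hfb⟩
      have h1' : φ za = zb := (huniv (φ za)).resolve_left hfa
      have h2' : φ zb = za := (huniv (φ zb)).resolve_right hfb
      exact Or.inr ⟨za, zb, hzab, h1', h2'⟩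
    have hge3 : 3 ≤ Fintype.card W := by omega
    -- the set of internal vertices
    set s₂ : Set W := {z | 2 ≤ H.degree z} with hs₂
    letI : DecidablePred (· ∈ s₂) := fun z => Nat.decLe _ _
    have hdegφ : ∀ z, H.degree (φ z) = H.degree z := by
      intro z
      rw [← card_neighborSet_eq_degree, ← card_neighborSet_eq_degree]
      exact (Fintype.card_congr (φ.mapNeighborSet z)).symm
    have hmemφ : ∀ z, z ∈ s₂ ↔ φ z ∈ s₂ := by
      intro z; simp only [hs₂, Set.mem_setOf_eq, hdegφ]
    -- s₂ nonempty
    have hs₂ne : ∃ z, z ∈ s₂ := by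
      by_contra hno
      push_neg at hno
      have hle : ∀ z : W, H.degree z ≤ 1 := by
        intro z; have := hno z; simp only [hs₂, Set.mem_setOf_eq] at this; omega
      have : ∑ v, H.degree v ≤ Fintype.card W * 1 :=
        Finset.sum_le_card_nsmul Finset.univ _ 1 (fun v _ => hle v)
      rw [hsum] at this
      omega
    -- internal vertices of paths are in s₂
    have hsupp : ∀ (zu zv : W), zu ∈ s₂ → zv ∈ s₂ →
        ∀ (p : H.Walk zu zv), p.IsPath → ∀ t ∈ p.support, t ∈ s₂ := by
      intro zu zv hu hv p hp t ht
      by_cases htu : t = zu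
      · exact htu ▸ hu
      by_cases htv : t = zv
      · exact htv ▸ hv
      obtain ⟨n1, n2, hne, ha1, ha2⟩ := internal_two_nbrs p hp t ht htu htv
      simp only [hs₂, Set.mem_setOf_eq]
      rw [← card_neighborSet_eq_degree]
      rw [show Fintype.card ↥(H.neighborSet t) = (H.neighborFinset t).card from by
        simp [neighborFinset]]
      exact Finset.one_lt_card.mpr ⟨n1, by simpa using ha1, n2, by simpa using ha2, hne⟩
    -- induced graph is a tree
    have hconn₂ : (H.induce s₂).Connected := by
      obtain ⟨zc, hzc⟩ := hs₂ne
      haveI : Nonempty ↥s₂ := ⟨⟨zc, hzc⟩⟩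
      refine ⟨fun a b => ?_⟩
      obtain ⟨p, hp, -⟩ := hH.existsUnique_path (a : W) (b : W)
      exact reachable_induce p (hsupp _ _ a.2 b.2 p hp) a.2 b.2
    have htree₂ : (H.induce s₂).IsTree := ⟨hconn₂, isAcyclic_induce hacyc s₂⟩
    -- the iso restricts
    let e₂ : ↥s₂ ≃ ↥s₂ := φ.toEquiv.subtypeEquiv (fun z => by
      simpa using hmemφ z)
    let φ₂ : (H.induce s₂) ≃g (H.induce s₂) :=
      { toEquiv := e₂
        map_rel_iff' := by
          intro a b
          simp only [e₂, Equiv.subtypeEquiv_apply]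
          exact φ.map_rel_iff }
    -- card decreases
    obtain ⟨l, hl⟩ := hleaf
    have hlnot : l ∉ s₂ := by simp [hs₂, hl]
    have hcard₂ : Fintype.card ↥s₂ ≤ M := by
      have h1' : Fintype.card ↥s₂ < Fintype.card W := by
        have := Fintype.card_subtype_lt (p := (· ∈ s₂)) hlnot
        convert this using 2
      omega
    rcases ih ↥s₂ inferInstance (H.induce s₂) htree₂ hcard₂ φ₂ with ⟨z, hz⟩ | ⟨z, z', hadj, hz1, hz2⟩
    · left
      refine ⟨(z : W), ?_⟩
      have := congrArg Subtype.val hz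
      simpa [φ₂, e₂] using this
    · right
      refine ⟨(z : W), (z' : W), hadj, ?_, ?_⟩
      · have := congrArg Subtype.val hz1; simpa [φ₂, e₂] using this
      · have := congrArg Subtype.val hz2; simpa [φ₂, e₂] using this


lemma serre_elliptic {Y : SimpleGraph W} (hY : Y.IsTree) (π : Equiv.Perm W)
    (hadj : ∀ u v, Y.Adj u v → Y.Adj (π u) (π v))
    (hadj' : ∀ u v, Y.Adj u v → Y.Adj (π⁻¹ u) (π⁻¹ v))
    (hninv : ∀ u v, Y.Adj u v → ¬(π u = v ∧ π v = u))
    {x : W} {n : ℕ} (hn : 0 < n) (hx : (π ^ n) x = x) : ∃ p, π p = p := by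
  classical
  by_contra hnofix
  push_neg at hnofix
  -- powers preserve adjacency
  have hadjpow : ∀ (k : ℕ) (u v : W), Y.Adj u v → Y.Adj ((π ^ k) u) ((π ^ k) v) := by
    intro k
    induction k with
    | zero => intro u v h; simpa using h
    | succ m ih =>
      intro u v h
      have := hadj _ _ (ih u v h)
      rw [pow_succ']
      simpa [Equiv.Perm.mul_apply] using this
  let hom : ℕ → (Y →g Y) := fun k => ⟨⇑(π ^ k), fun h => hadjpow k _ _ h⟩
  obtain ⟨P₀, hP₀path, hP₀uniq⟩ := hY.existsUnique_path x (π x)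
  have hπnπx : (π ^ n) (π x) = π x := by
    rw [← Equiv.Perm.mul_apply, ← pow_succ, pow_succ', Equiv.Perm.mul_apply, hx]
  -- π^n fixes the support of P₀ pointwise
  have hfixsupp : ∀ z ∈ P₀.support, (π ^ n) z = z := by
    have hinj : Function.Injective (hom n) := (π ^ n).injective
    have hP1 : (((P₀.map (hom n)).copy hx hπnπx)).IsPath := by
      rw [Walk.isPath_copy]
      exact P₀.map_isPath_of_injective hinj hP₀path
    have heq := hP₀uniq _ hP1
    have hsupp := congrArg Walk.support heq
    rw [Walk.support_copy, Walk.support_map] at hsupp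
    exact list_map_fix hsupp
  -- the invariant finite set
  set SF : Finset W := (Finset.range n).biUnion
    (fun i => (P₀.support.map (⇑(π ^ i))).toFinset) with hSF
  have hmem : ∀ z, z ∈ SF ↔ ∃ i, i < n ∧ ∃ t ∈ P₀.support, (π ^ i) t = z := by
    intro z
    simp [hSF, List.mem_toFinset, List.mem_map]
  have hSx : x ∈ SF := by
    rw [hmem]
    exact ⟨0, hn, x, P₀.start_mem_support, by simp⟩
  have hinv : ∀ z ∈ SF, π z ∈ SF := by
    intro z hz
    rw [hmem] at hz ⊢
    obtain ⟨i, hi, t, ht, rfl⟩ := hz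
    by_cases hin : i + 1 < n
    · exact ⟨i + 1, hin, t, ht, by rw [pow_succ', Equiv.Perm.mul_apply]⟩
    · have hieq : i + 1 = n := by omega
      refine ⟨0, hn, t, ht, ?_⟩
      have : π ((π ^ i) t) = (π ^ n) t := by
        rw [← hieq, pow_succ', Equiv.Perm.mul_apply]
      rw [this, hfixsupp t ht]
      simp
  have hinv' : ∀ z ∈ SF, π⁻¹ z ∈ SF := by
    intro z hz
    rw [hmem] at hz ⊢
    obtain ⟨i, hi, t, ht, rfl⟩ := hz
    rcases Nat.eq_zero_or_pos i with rfl | hipos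
    · refine ⟨n - 1, by omega, t, ht, ?_⟩
      have h1 : (π ^ 0) t = t := by simp
      rw [h1]
      have h2 : π ((π ^ (n - 1)) t) = t := by
        have : π ^ n = π * π ^ (n - 1) := by
          rw [← pow_succ']; congr 1; omega
        have h3 := hfixsupp t ht
        rw [this, Equiv.Perm.mul_apply] at h3
        exact h3
      have h4 : π⁻¹ t = (π ^ (n - 1)) t := by
        conv_lhs => rw [← h2]
        exact Equiv.symm_apply_apply _ _
      exact h4.symm
    · refine ⟨i - 1, by omega, t, ht, ?_⟩
      have : π ^ i = π * π ^ (i - 1) := by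
        rw [← pow_succ']; congr 1; omega
      rw [this, Equiv.Perm.mul_apply]
      simp
  -- chain connectivity to x within SF
  have hPisupp : ∀ i, i < n → ∀ z ∈ (P₀.map (hom i)).support, z ∈ SF := by
    intro i hi z hz
    rw [Walk.support_map, List.mem_map] at hz
    obtain ⟨t, ht, rfl⟩ := hz
    rw [hmem]
    exact ⟨i, hi, t, ht, rfl⟩
  have hchain : ∀ i, i < n → ∃ pw : Y.Walk ((π ^ i) x) x, ∀ t ∈ pw.support, t ∈ SF := by
    intro i
    induction i with
    | zero =>
      intro _
      refine ⟨(Walk.nil : Y.Walk x x).copy (by simp) rfl, ?_⟩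
      intro t ht
      rw [Walk.support_copy] at ht
      simp only [Walk.support_nil, List.mem_singleton] at ht
      rw [ht]; exact hSx
    | succ m ih =>
      intro hm
      obtain ⟨pw, hpw⟩ := ih (by omega)
      have hend : (π ^ m) (π x) = (π ^ (m + 1)) x := by
        rw [pow_succ, Equiv.Perm.mul_apply]
      refine ⟨(((P₀.map (hom m)).copy rfl hend).reverse).append pw, ?_⟩
      intro t ht
      rw [Walk.support_append] at ht
      rcases List.mem_append.mp ht with h | h
      · rw [Walk.support_reverse, List.mem_reverse, Walk.support_copy] at h
        exact hPisupp m (by omega) _ h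
      · exact hpw t (List.mem_of_mem_tail h)
  have hreachx : ∀ z (hz : z ∈ SF), ∃ pw : Y.Walk z x, ∀ t ∈ pw.support, t ∈ SF := by
    intro z hz
    rw [hmem] at hz
    obtain ⟨i, hi, t, ht, rfl⟩ := hz
    have hzsupp : (π ^ i) t ∈ (P₀.map (hom i)).support := by
      rw [Walk.support_map, List.mem_map]
      exact ⟨t, ht, rfl⟩
    obtain ⟨pw, hpw⟩ := hchain i hi
    refine ⟨(((P₀.map (hom i)).takeUntil _ hzsupp).reverse).append pw, ?_⟩
    intro s hs
    rw [Walk.support_append] at hs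
    rcases List.mem_append.mp hs with h | h
    · rw [Walk.support_reverse, List.mem_reverse] at h
      exact hPisupp i hi _ (Walk.support_takeUntil_subset _ _ h)
    · exact hpw s (List.mem_of_mem_tail h)
  -- induced graph on SF is a tree
  haveI : Nonempty ↥(↑SF : Set W) := ⟨⟨x, hSx⟩⟩
  have hconnS : (Y.induce (↑SF : Set W)).Connected := by
    refine ⟨fun a b => ?_⟩
    obtain ⟨pa, hpa⟩ := hreachx a a.2
    obtain ⟨pb, hpb⟩ := hreachx b b.2
    have r1 := reachable_induce pa (fun z hz => hpa z hz) a.2 hSx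
    have r2 := reachable_induce pb (fun z hz => hpb z hz) b.2 hSx
    exact r1.trans r2.symm
  have htreeS : (Y.induce (↑SF : Set W)).IsTree :=
    ⟨hconnS, isAcyclic_induce hY.2 _⟩
  -- the permutation restricts to an isomorphism of the induced graph
  let eS : ↥(↑SF : Set W) ≃ ↥(↑SF : Set W) :=
    { toFun := fun z => ⟨π z, hinv z z.2⟩
      invFun := fun z => ⟨π⁻¹ z, hinv' z z.2⟩
      left_inv := fun z => by ext; simp
      right_inv := fun z => by ext; simp }
  let φS : (Y.induce (↑SF : Set W)) ≃g (Y.induce (↑SF : Set W)) :=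
    { toEquiv := eS
      map_rel_iff' := by
        intro a b
        show Y.Adj (π a) (π b) ↔ Y.Adj a b
        constructor
        · intro h
          have := hadj' _ _ h
          simpa using this
        · exact hadj _ _ }
  rcases finite_tree_iso_fix (Fintype.card ↥(↑SF : Set W)) _ inferInstance _ htreeS le_rfl φS with
    ⟨z, hz⟩ | ⟨z, z', hadj2, h1, h2⟩
  · exact hnofix (z : W) (congrArg Subtype.val hz)
  · have hYadj : Y.Adj (z : W) (z' : W) := hadj2
    exact hninv _ _ hYadj ⟨congrArg Subtype.val h1, congrArg Subtype.val h2⟩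

section Grp
variable {G V : Type} [Group G] {ρ : G →* Equiv.Perm V}

lemma mem_vStab_iff {k : G} {v : V} : k ∈ vStab ρ v ↔ ρ k v = v := by
  simp [vStab, Subgroup.mem_comap, MulAction.mem_stabilizer_iff, Equiv.Perm.smul_def]

lemma edgeOrbit_comm (a b : V) : EdgeOrbit ρ a b = EdgeOrbit ρ b a := by
  ext e
  constructor <;> rintro ⟨g, rfl⟩ <;> exact ⟨g, Sym2.eq_swap.symm⟩

lemma edgeOrbit_translate (h : G) (a b : V) :
    EdgeOrbit ρ (ρ h a) (ρ h b) = EdgeOrbit ρ a b := by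
  ext e
  constructor
  · rintro ⟨g, rfl⟩
    exact ⟨g * h, by simp [map_mul]⟩
  · rintro ⟨g, rfl⟩
    refine ⟨g * h⁻¹, ?_⟩
    simp [map_mul, map_inv]

lemma claim1 {X : SimpleGraph V}
    (hXt : X.IsTree) (hXadj : PreservesAdj X ρ) (hXni : NoInversions X ρ)
    {W : Type} {σ : G →* Equiv.Perm W} {q : V → W}
    (hq : ∀ (g : G) (z : V), q (ρ g z) = σ g (q z))
    {a₁ b₁ : V} (hab : X.Adj a₁ b₁)
    (hfib : ∀ x y : V, q x = q y ↔ ∃ p : X.Walk x y, ∀ e ∈ p.edges, e ∉ EdgeOrbit ρ a₁ b₁)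
    (k : G) (hk1 : σ k (q a₁) = q a₁) (hk2 : σ k (q b₁) = q b₁) :
    ρ k a₁ = a₁ ∧ ρ k b₁ = b₁ := by
  have h1 : q (ρ k a₁) = q a₁ := by rw [hq]; exact hk1
  have h2 : q (ρ k b₁) = q b₁ := by rw [hq]; exact hk2
  obtain ⟨W₁, hW₁⟩ := (hfib _ _).mp h1
  obtain ⟨W₂, hW₂⟩ := (hfib _ _).mp h2
  have hmidadj : X.Adj (ρ k a₁) (ρ k b₁) := hXadj k _ _ hab
  have hbr := (isBridge_iff_adj_and_forall_walk_mem_edges.mp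
    (isAcyclic_iff_forall_adj_isBridge.mp hXt.2 hab))
  have horbself : s(a₁, b₁) ∈ EdgeOrbit ρ a₁ b₁ := ⟨1, by simp⟩
  have hWW := hbr (W₁.reverse.append (Walk.cons hmidadj W₂))
  rw [Walk.edges_append, Walk.edges_reverse, Walk.edges_cons] at hWW
  rcases List.mem_append.mp hWW with hc | hc
  · rw [List.mem_reverse] at hc
    exact absurd horbself (hW₁ _ hc)
  · rcases List.mem_cons.mp hc with hc' | hc'
    · rcases Sym2.eq_iff.mp hc' with ⟨hu, hv⟩ | ⟨hu, hv⟩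
      · exact ⟨hu.symm, hv.symm⟩
      · exact absurd ⟨hv.symm, hu.symm⟩ (hXni k a₁ b₁ hab)
    · exact absurd horbself (hW₂ _ hc')

lemma core {W W' : Type}
    {X : SimpleGraph V}
    (hXt : IsGTree X ρ) (hcyc : ∀ v : V, IsInfCyclic (vStab ρ v))
    (hproper : ∀ u v : V, X.Adj u v → eStab ρ u v < vStab ρ u ∧ eStab ρ u v < vStab ρ v)
    {a b : V} (hab : X.Adj a b)
    {T : SimpleGraph W} {σ : G →* Equiv.Perm W} {q : V → W}
    (hT : IsGTree T σ) (hcol : IsCollapseMap X ρ a b T σ q)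
    {T' : SimpleGraph W'} {σ' : G →* Equiv.Perm W'} {f : W' → W}
    (hT' : IsGTree T' σ')
    (horb : OneEdgeOrbit T' σ')
    (hfeq : ∀ (g : G) (z : W'), f (σ' g z) = σ g (f z))
    (hfadj : ∀ u v : W', T'.Adj u v → T.Adj (f u) (f v))
    {x y : W'} (hxy : T'.Adj x y)
    {g : G} (hgx : σ' g x = x) (hgy : σ' g y ≠ y) (hgfy : σ g (f y) = f y)
    {h₀ : G} (h01 : σ h₀ (q a) = f x) (h02 : σ h₀ (q b) = f y) : False := by
  obtain ⟨hq, hqsurj, hqadj, hfib0, htrans0⟩ := hcol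
  set a₁ := ρ h₀ a with ha₁
  set b₁ := ρ h₀ b with hb₁
  have hab₁ : X.Adj a₁ b₁ := hXt.2.1 h₀ _ _ hab
  have hqa₁ : q a₁ = f x := by rw [ha₁, hq, h01]
  have hqb₁ : q b₁ = f y := by rw [hb₁, hq, h02]
  have hfib₁ : ∀ x' y' : V, q x' = q y' ↔
      ∃ p : X.Walk x' y', ∀ e ∈ p.edges, e ∉ EdgeOrbit ρ a₁ b₁ := by
    intro x' y'
    rw [ha₁, hb₁, edgeOrbit_translate]
    exact hfib0 x' y'
  have hC1 : ∀ k : G, σ k (f x) = f x → σ k (f y) = f y → ρ k a₁ = a₁ ∧ ρ k b₁ = b₁ := by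
    intro k hk1 hk2
    exact claim1 hXt.1 hXt.2.1 hXt.2.2 hq hab₁ hfib₁ k
      (by rw [hqa₁]; exact hk1) (by rw [hqb₁]; exact hk2)
  have hgfx : σ g (f x) = f x := by rw [← hfeq, hgx]
  obtain ⟨hga, hgb⟩ := hC1 g hgfx hgfy
  have hgA : g ∈ vStab ρ a₁ := mem_vStab_iff.mpr hga
  have hgB : g ∈ vStab ρ b₁ := mem_vStab_iff.mpr hgb
  have hgE : g ∈ eStab ρ a₁ b₁ := Subgroup.mem_inf.mpr ⟨hgA, hgB⟩
  have hg1 : g ≠ 1 := by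
    intro hcontr
    apply hgy
    rw [hcontr, map_one]
    rfl
  -- generators of the vertex stabilizers
  haveI hAcyc : IsCyclic ↥(vStab ρ a₁) := (hcyc a₁).1
  haveI hBcyc : IsCyclic ↥(vStab ρ b₁) := (hcyc b₁).1
  obtain ⟨ζa, hζa⟩ := IsCyclic.exists_generator (α := ↥(vStab ρ a₁))
  obtain ⟨ζb, hζb⟩ := IsCyclic.exists_generator (α := ↥(vStab ρ b₁))
  set αa : G := (ζa : G) with hαa
  set αb : G := (ζb : G) with hαb
  -- fixed points of the generators in T' (Serre's lemma)
  have hfixpt : ∀ (ζ : G) (hmemζ : ρ ζ a₁ = a₁ ∨ ρ ζ b₁ = b₁),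
      (∃ j : ℤ, ζ ^ j = g ∧ j ≠ 0) → ∃ p : W', σ' ζ p = p := by
    intro ζ _ ⟨j, hj, hjne⟩
    have hxfix : ((σ' ζ) ^ j) x = x := by
      rw [← map_zpow, hj]
      exact hgx
    obtain ⟨nn, hnn, hnx⟩ := zpow_fix_to_natpow (σ' ζ) hjne hxfix
    exact serre_elliptic hT'.1 (σ' ζ) (hT'.2.1 ζ)
      (fun u v h => by have := hT'.2.1 ζ⁻¹ u v h; rwa [map_inv] at this)
      (hT'.2.2 ζ) hnn hnx
  have hgetpow : ∀ (H : Subgroup G) (ζ : ↥H) (hgen : ∀ z : ↥H, z ∈ Subgroup.zpowers ζ)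
      (k : G) (hk : k ∈ H), ∃ j : ℤ, (ζ : G) ^ j = k := by
    intro H ζ hgen k hk
    obtain ⟨j, hj⟩ := Subgroup.mem_zpowers_iff.mp (hgen ⟨k, hk⟩)
    refine ⟨j, ?_⟩
    have := congrArg Subtype.val hj
    simpa using this
  obtain ⟨ja, hja⟩ := hgetpow _ ζa hζa g hgA
  obtain ⟨jb, hjb⟩ := hgetpow _ ζb hζb g hgB
  have hjane : ja ≠ 0 := by
    intro hcontr; apply hg1; rw [← hja, hcontr, zpow_zero]
  have hjbne : jb ≠ 0 := by
    intro hcontr; apply hg1; rw [← hjb, hcontr, zpow_zero]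
  obtain ⟨pa, hpa⟩ := hfixpt αa (Or.inl (mem_vStab_iff.mp ζa.2)) ⟨ja, hja, hjane⟩
  obtain ⟨pb, hpb⟩ := hfixpt αb (Or.inr (mem_vStab_iff.mp ζb.2)) ⟨jb, hjb, hjbne⟩
  -- all of vStab a₁ fixes pa, all of vStab b₁ fixes pb
  have hfixA : ∀ k ∈ vStab ρ a₁, σ' k pa = pa := by
    intro k hk
    obtain ⟨j, hj⟩ := hgetpow _ ζa hζa k hk
    rw [← hj, map_zpow]
    exact perm_fix_zpow _ hpa j
  have hfixB : ∀ k ∈ vStab ρ b₁, σ' k pb = pb := by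
    intro k hk
    obtain ⟨j, hj⟩ := hgetpow _ ζb hζb k hk
    rw [← hj, map_zpow]
    exact perm_fix_zpow _ hpb j
  -- the path Q from pa to pb is fixed pointwise by eStab
  obtain ⟨Q, hQpath, -⟩ := hT'.1.existsUnique_path pa pb
  have hQfix : ∀ k ∈ eStab ρ a₁ b₁, ∀ z ∈ Q.support, σ' k z = z := by
    intro k hk z hz
    obtain ⟨hk1, hk2⟩ := Subgroup.mem_inf.mp hk
    exact fix_walk_support hT'.1 (σ' k) (hT'.2.1 k) (hfixA k hk1) (hfixB k hk2) Q hQpath z hz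
  -- T-side: the paths P₁, P₂ avoid the other endpoint
  have hvwadj : T.Adj (f x) (f y) := hfadj x y hxy
  have hαafx : σ αa (f x) = f x := by
    rw [← hqa₁, ← hq, mem_vStab_iff.mp ζa.2]
  have hαbfy : σ αb (f y) = f y := by
    rw [← hqb₁, ← hq, mem_vStab_iff.mp ζb.2]
  have hαafpa : σ αa (f pa) = f pa := by rw [← hfeq, hpa]
  have hαbfpb : σ αb (f pb) = f pb := by rw [← hfeq, hpb]
  obtain ⟨P₁, hP₁path, -⟩ := hT.1.existsUnique_path (f x) (f pa)
  obtain ⟨P₂, hP₂path, -⟩ := hT.1.existsUnique_path (f y) (f pb)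
  have hP₁w : f y ∉ P₁.support := by
    intro hmem
    have hfix := fix_walk_support hT.1 (σ αa) (hT.2.1 αa) hαafx hαafpa P₁ hP₁path (f y) hmem
    obtain ⟨hca, hcb⟩ := hC1 αa hαafx hfix
    have hαaE : αa ∈ eStab ρ a₁ b₁ :=
      Subgroup.mem_inf.mpr ⟨mem_vStab_iff.mpr hca, mem_vStab_iff.mpr hcb⟩
    have hle : vStab ρ a₁ ≤ eStab ρ a₁ b₁ := by
      intro k hk
      obtain ⟨j, hj⟩ := hgetpow _ ζa hζa k hk
      rw [← hj]
      exact zpow_mem hαaE j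
    exact (lt_iff_le_not_ge.mp (hproper a₁ b₁ hab₁).1).2 hle
  have hP₂v : f x ∉ P₂.support := by
    intro hmem
    have hfix := fix_walk_support hT.1 (σ αb) (hT.2.1 αb) hαbfy hαbfpb P₂ hP₂path (f x) hmem
    obtain ⟨hca, hcb⟩ := hC1 αb hfix hαbfy
    have hαbE : αb ∈ eStab ρ a₁ b₁ :=
      Subgroup.mem_inf.mpr ⟨mem_vStab_iff.mpr hca, mem_vStab_iff.mpr hcb⟩
    have hle : vStab ρ b₁ ≤ eStab ρ a₁ b₁ := by
      intro k hk
      obtain ⟨j, hj⟩ := hgetpow _ ζb hζb k hk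
      rw [← hj]
      exact zpow_mem hαbE j
    exact (lt_iff_le_not_ge.mp (hproper a₁ b₁ hab₁).2).2 hle
  -- the image of Q crosses the edge (f x, f y)
  let homf : T' →g T := ⟨f, fun h => hfadj _ _ h⟩
  have hcross := cross_bridge hT.1 hvwadj P₁ hP₁w P₂ hP₂v (Q.map homf)
  rw [Walk.edges_map, List.mem_map] at hcross
  obtain ⟨e', he', heq⟩ := hcross
  induction e' using Sym2.ind with
  | _ z z₁ =>
  have hT'zz : T'.Adj z z₁ := Q.adj_of_mem_edges he'
  have hzsupp : z ∈ Q.support := Q.fst_mem_support_of_mem_edges he'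
  have hz₁supp : z₁ ∈ Q.support := Q.snd_mem_support_of_mem_edges he'
  have hcase : (f z = f x ∧ f z₁ = f y) ∨ (f z = f y ∧ f z₁ = f x) := by
    have : s(f z, f z₁) = s(f x, f y) := by
      rw [← heq]; rfl
    exact Sym2.eq_iff.mp this
  -- get the translating element h
  obtain ⟨u₀, v₀, hu₀v₀, htrans⟩ := horb
  obtain ⟨g₁, hg₁⟩ := htrans x y hxy
  obtain ⟨g₂, hg₂⟩ := htrans z z₁ hT'zz
  set h : G := g₂ * g₁⁻¹ with hh
  have hinvap : ∀ (u : W') (t : W'), σ' g₁ u = t → σ' g₁⁻¹ t = u := by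
    intro u t hu
    rw [map_inv, ← hu]
    exact Equiv.symm_apply_apply _ _
  have hhxy : (σ' h x = z ∧ σ' h y = z₁) ∨ (σ' h x = z₁ ∧ σ' h y = z) := by
    rw [hh]
    rcases hg₁ with ⟨hx1, hy1⟩ | ⟨hx1, hy1⟩ <;> rcases hg₂ with ⟨hx2, hy2⟩ | ⟨hx2, hy2⟩
    · exact Or.inl ⟨by rw [map_mul, Equiv.Perm.mul_apply, hinvap _ _ hx1, hx2],
        by rw [map_mul, Equiv.Perm.mul_apply, hinvap _ _ hy1, hy2]⟩
    · exact Or.inr ⟨by rw [map_mul, Equiv.Perm.mul_apply, hinvap _ _ hx1, hx2],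
        by rw [map_mul, Equiv.Perm.mul_apply, hinvap _ _ hy1, hy2]⟩
    · exact Or.inr ⟨by rw [map_mul, Equiv.Perm.mul_apply, hinvap _ _ hy1, hy2],
        by rw [map_mul, Equiv.Perm.mul_apply, hinvap _ _ hx1, hx2]⟩
    · exact Or.inl ⟨by rw [map_mul, Equiv.Perm.mul_apply, hinvap _ _ hy1, hy2],
        by rw [map_mul, Equiv.Perm.mul_apply, hinvap _ _ hx1, hx2]⟩
  -- h fixes (f x) and (f y), or swaps them (impossible)
  have hhfix : σ h (f x) = f x ∧ σ h (f y) = f y := by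
    have hpair : ((σ h) (f x) = f z ∧ (σ h) (f y) = f z₁) ∨
        ((σ h) (f x) = f z₁ ∧ (σ h) (f y) = f z) := by
      rcases hhxy with ⟨h1, h2⟩ | ⟨h1, h2⟩
      · exact Or.inl ⟨by rw [← hfeq, h1], by rw [← hfeq, h2]⟩
      · exact Or.inr ⟨by rw [← hfeq, h1], by rw [← hfeq, h2]⟩
    have hnoswap : ¬((σ h) (f x) = f y ∧ (σ h) (f y) = f x) := hT.2.2 h (f x) (f y) hvwadj
    rcases hpair with ⟨h1, h2⟩ | ⟨h1, h2⟩ <;> rcases hcase with ⟨hc1, hc2⟩ | ⟨hc1, hc2⟩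
    · exact ⟨by rw [h1, hc1], by rw [h2, hc2]⟩
    · exact absurd ⟨by rw [h1, hc1], by rw [h2, hc2]⟩ hnoswap
    · exact absurd ⟨by rw [h1, hc2], by rw [h2, hc1]⟩ hnoswap
    · exact ⟨by rw [h1, hc2], by rw [h2, hc1]⟩
  obtain ⟨hca, hcb⟩ := hC1 h hhfix.1 hhfix.2
  have hhE : h ∈ eStab ρ a₁ b₁ :=
    Subgroup.mem_inf.mpr ⟨mem_vStab_iff.mpr hca, mem_vStab_iff.mpr hcb⟩
  -- conclude x, y lie on Q, so g fixes y : contradiction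
  have hinvfix : ∀ t, t ∈ Q.support → ∀ u : W', σ' h u = t → u = t := by
    intro t ht u hu
    have hfixt := hQfix h⁻¹ (inv_mem hhE) t ht
    rw [map_inv] at hfixt
    calc u = (σ' h)⁻¹ (σ' h u) := (Equiv.symm_apply_apply _ _).symm
    _ = (σ' h)⁻¹ t := by rw [hu]
    _ = t := hfixt
  have hymem : y ∈ Q.support := by
    rcases hhxy with ⟨_, h2⟩ | ⟨_, h2⟩
    · rw [hinvfix z₁ hz₁supp y h2]; exact hz₁supp
    · rw [hinvfix z hzsupp y h2]; exact hzsupp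
  exact hgy (hQfix g hgE y hymem)

end Grp

lemma collapse_swap {G V W : Type} [Group G] {X : SimpleGraph V} {ρ : G →* Equiv.Perm V}
    {a b : V} {T : SimpleGraph W} {σ : G →* Equiv.Perm W} {q : V → W}
    (h : IsCollapseMap X ρ a b T σ q) : IsCollapseMap X ρ b a T σ q := by
  obtain ⟨h1, h2, h3, h4, h5⟩ := h
  refine ⟨h1, h2, h3.symm, ?_, ?_⟩
  · intro x y
    rw [edgeOrbit_comm b a]
    exact h4 x y
  · intro u' v' hadj
    obtain ⟨g, hg⟩ := h5 u' v' hadj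
    rcases hg with ⟨hga, hgb⟩ | ⟨hga, hgb⟩
    · exact ⟨g, Or.inr ⟨hgb, hga⟩⟩
    · exact ⟨g, Or.inl ⟨hgb, hga⟩⟩

end AuxLemmas

/-- A cocompact generalized Baumslag–Solitar tree in which
every edge stabilizer is a proper subgroup of both neighboring vertex
stabilizers is unfolded: for every edge `{a, b}`, the one-edge splitting
obtained by collapsing the components of `X − G⬝{a,b}` admits no nontrivial
fold onto it. -/
theorem gbs_unfolded {G V : Type} [Group G]
    (X : SimpleGraph V) (ρ : G →* Equiv.Perm V) (hX : IsGBSTree X ρ)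
    (hcocpt : Finite (Quot fun x y : V => ∃ g : G, ρ g x = y))
    (hproper : ∀ u v : V, X.Adj u v → eStab ρ u v < vStab ρ u ∧ eStab ρ u v < vStab ρ v) :
    ∀ a b : V, X.Adj a b →
      ∀ (W : Type) (T : SimpleGraph W) (σ : G →* Equiv.Perm W) (q : V → W),
        IsGTree T σ → IsCollapseMap X ρ a b T σ q →
        ∀ (W' : Type) (T' : SimpleGraph W') (σ' : G →* Equiv.Perm W') (f : W' → W),
          IsGTree T' σ' → OneEdgeOrbit T' σ' →
          ¬ NontrivialFoldOnto T' σ' T σ f := by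
  intro a b hab W T σ q hT hcol W' T' σ' f hT' horb hfold
  obtain ⟨hfeq, hfsurj, hfadj, x, y, y', hxy, hxy', hyy', hfyy⟩ := hfold
  have horbc := horb
  obtain ⟨u₀, v₀, hu₀v₀, htrans⟩ := horbc
  obtain ⟨g₁, hg₁⟩ := htrans x y hxy
  obtain ⟨g₃, hg₃⟩ := htrans x y' hxy'
  set g : G := g₃ * g₁⁻¹ with hg
  have hinvap : ∀ (u t : W'), σ' g₁ u = t → σ' g₁⁻¹ t = u := by
    intro u t hu
    rw [map_inv, ← hu]
    exact Equiv.symm_apply_apply _ _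
  have hcases : (σ' g x = x ∧ σ' g y = y') ∨ (σ' g x = y' ∧ σ' g y = x) := by
    rcases hg₁ with ⟨hx1, hy1⟩ | ⟨hx1, hy1⟩ <;> rcases hg₃ with ⟨hx2, hy2⟩ | ⟨hx2, hy2⟩
    · exact Or.inl ⟨by rw [hg, map_mul, Equiv.Perm.mul_apply, hinvap _ _ hx1, hx2],
        by rw [hg, map_mul, Equiv.Perm.mul_apply, hinvap _ _ hy1, hy2]⟩
    · exact Or.inr ⟨by rw [hg, map_mul, Equiv.Perm.mul_apply, hinvap _ _ hx1, hx2],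
        by rw [hg, map_mul, Equiv.Perm.mul_apply, hinvap _ _ hy1, hy2]⟩
    · exact Or.inr ⟨by rw [hg, map_mul, Equiv.Perm.mul_apply, hinvap _ _ hy1, hy2],
        by rw [hg, map_mul, Equiv.Perm.mul_apply, hinvap _ _ hx1, hx2]⟩
    · exact Or.inl ⟨by rw [hg, map_mul, Equiv.Perm.mul_apply, hinvap _ _ hy1, hy2],
        by rw [hg, map_mul, Equiv.Perm.mul_apply, hinvap _ _ hx1, hx2]⟩
  rcases hcases with ⟨hgx, hgy'⟩ | ⟨hgx, hgy'⟩
  · -- genuine fold element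
    have hgy : σ' g y ≠ y := by
      rw [hgy']
      exact fun hc => hyy' hc.symm
    have hgfy : σ g (f y) = f y := by
      rw [← hfeq, hgy']
      exact hfyy.symm
    obtain ⟨h₀, hh₀⟩ := hcol.2.2.2.2 (f x) (f y) (hfadj x y hxy)
    rcases hh₀ with ⟨h01, h02⟩ | ⟨h01, h02⟩
    · exact core hX.1 hX.2.1 hproper hab hT hcol hT' horb hfeq hfadj hxy hgx hgy hgfy h01 h02
    · exact core hX.1 hX.2.1 hproper hab.symm hT (collapse_swap hcol) hT' horb hfeq hfadj hxy
        hgx hgy hgfy h02 h01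
  · -- inversion in T : impossible
    have h1 : σ g (f x) = f y := by rw [← hfeq, hgx]; exact hfyy.symm
    have h2 : σ g (f y) = f x := by rw [← hfeq, hgy']
    exact hT.2.2 g (f x) (f y) (hfadj x y hxy) ⟨h1, h2⟩
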